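/- Let a ≥ 2 and n ≥ 1 be natural numbers, let m ≥ 2, and let c_1 < c_2 < ... < c_m be positive integers such that the numbers p_i = a^{c_i} n + 1 are (distinct) primes for i = 1, ..., m. Then for N = p_1 p_2 ⋯ p_m, the number φ(N) does not divide (N − 1)^m. -/

import Mathlib

open Finset

private lemma totient_prod_aux {ι : Type*} (s : Finset ι) (f : ι → ℕ)
    (hs : (s : Set ι).Pairwise (Function.onFun Nat.Coprime f)) :
    Nat.totient (∏ i ∈ s, f i) = ∏ i ∈ s, Nat.totient (f i) := by
  classical
  induction' s using Finset.induction_on with a s has ih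
  · simp
  · rw [coe_insert, Set.pairwise_insert] at hs
    rw [prod_insert has, prod_insert has,
      Nat.totient_mul (Nat.Coprime.prod_right fun i hi => (hs.2 _ hi (by rintro rfl; exact has hi)).1),
      ih hs.1]

private lemma prod_one_add_aux {ι : Type*} (s : Finset ι) (g : ι → ℕ) (Q : ℕ)
    (h : ∀ i ∈ s, ∃ u, g i = 1 + Q * u) : ∃ t, ∏ i ∈ s, g i = 1 + Q * t := by
  classical
  induction' s using Finset.induction_on with a s has ih
  · exact ⟨0, by simp⟩
  · obtain ⟨u, hu⟩ := h a (mem_insert_self a s)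
    obtain ⟨t, ht⟩ := ih fun i hi => h i (mem_insert_of_mem hi)
    exact ⟨u + t + Q * u * t, by rw [prod_insert has, hu, ht]; ring⟩

/-- If `p i = a ^ (c i) * n + 1` are primes with `c` strictly increasing and positive
(`a ≥ 2`, `n ≥ 1`, `m ≥ 2`), then for `N = ∏ p i` we have `φ N ∤ (N - 1) ^ m`. -/
theorem totient_not_dvd_pow_of_tuple (a n m : ℕ) (ha : 2 ≤ a) (hn : 1 ≤ n) (hm : 2 ≤ m)
    (c : Fin m → ℕ) (hc : ∀ i, 1 ≤ c i) (hmono : StrictMono c)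
    (hprime : ∀ i, Nat.Prime (a ^ c i * n + 1)) :
    ¬ Nat.totient (∏ i, (a ^ c i * n + 1)) ∣ ((∏ i, (a ^ c i * n + 1)) - 1) ^ m := by
  intro hdvd
  have ha0 : a ≠ 0 := by omega
  have hn0 : n ≠ 0 := by omega
  set p : Fin m → ℕ := fun i => a ^ c i * n + 1 with hpdef
  set N : ℕ := ∏ i, p i with hNdef
  -- injectivity of p
  have hpinj : Function.Injective p := by
    intro i j hij
    have h1 : a ^ c i * n = a ^ c j * n := by simpa [hpdef] using hij
    have h2 : a ^ c i = a ^ c j := Nat.eq_of_mul_eq_mul_right (by omega) h1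
    exact hmono.injective (Nat.pow_right_injective ha h2)
  set i0 : Fin m := ⟨0, by omega⟩ with hi0def
  set C : ℕ := ∑ i, c i with hCdef
  -- totient of N
  have htot : Nat.totient N = a ^ C * n ^ m := by
    have hpair : ((Finset.univ : Finset (Fin m)) : Set (Fin m)).Pairwise (Function.onFun Nat.Coprime p) :=
      fun i _ j _ hij =>
        (Nat.coprime_primes (hprime i) (hprime j)).mpr fun h => hij (hpinj h)
    rw [hNdef, totient_prod_aux _ _ hpair]
    have hti : ∀ i : Fin m, Nat.totient (p i) = a ^ c i * n := by
      intro i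
      simp only [hpdef]
      rw [Nat.totient_prime (hprime i), Nat.add_sub_cancel]
    rw [Finset.prod_congr rfl fun i _ => hti i, Finset.prod_mul_distrib,
      Finset.prod_pow_eq_pow_sum, ← hCdef, Finset.prod_const, Finset.card_univ,
      Fintype.card_fin]
  -- the prime q and valuations
  set q : ℕ := a.minFac with hqdef
  have hq : q.Prime := Nat.minFac_prime (by omega)
  set α : ℕ := a.factorization q with hαdef
  set β : ℕ := n.factorization q with hβdef
  have hα : 1 ≤ α := hq.factorization_pos_of_dvd ha0 (Nat.minFac_dvd a)
  have hqa : q ^ α ∣ a := Nat.ordProj_dvd a q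
  have hqn : q ^ β ∣ n := Nat.ordProj_dvd n q
  have hdiv : ∀ k, q ^ (α * k + β) ∣ a ^ k * n := by
    intro k
    rw [pow_add]
    exact mul_dvd_mul (by rw [pow_mul]; exact pow_dvd_pow_of_dvd hqa k) hqn
  set v : ℕ := α * c i0 + β with hvdef
  have hXne : a ^ c i0 * n ≠ 0 := mul_ne_zero (pow_ne_zero _ ha0) hn0
  have hfactX : (a ^ c i0 * n).factorization q = v := by
    rw [Nat.factorization_mul (pow_ne_zero _ ha0) hn0, Nat.factorization_pow]
    simp only [Finsupp.coe_add, Finsupp.coe_smul, Pi.add_apply, Pi.smul_apply, smul_eq_mul,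
      ← hαdef, ← hβdef, hvdef]
    ring
  have hndX : ¬ q ^ (v + 1) ∣ a ^ c i0 * n := by
    have := Nat.pow_succ_factorization_not_dvd hXne hq
    rwa [hfactX] at this
  -- structure of N - 1
  have hcase : ∃ t, N = 1 + a ^ c i0 * n + q ^ (v + 1) * t := by
    have hfac : ∀ i ∈ (Finset.univ : Finset (Fin m)).erase i0,
        ∃ u, p i = 1 + q ^ (v + 1) * u := by
      intro i hi
      have hne : i ≠ i0 := (Finset.mem_erase.mp hi).1
      have hlt : i0 < i := lt_of_le_of_ne (by simp [hi0def, Fin.le_def]) (Ne.symm hne)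
      have hci : c i0 + 1 ≤ c i := hmono hlt
      have h2 : α * (c i0 + 1) ≤ α * c i := Nat.mul_le_mul_left _ hci
      rw [Nat.mul_add, mul_one] at h2
      have hle : v + 1 ≤ α * c i + β := by omega
      obtain ⟨u, hu⟩ := (pow_dvd_pow q hle).trans (hdiv (c i))
      exact ⟨u, by simp only [hpdef]; omega⟩
    obtain ⟨s, hs⟩ := prod_one_add_aux ((Finset.univ : Finset (Fin m)).erase i0) p
      (q ^ (v + 1)) hfac
    refine ⟨s * (a ^ c i0 * n) + s, ?_⟩
    rw [hNdef, ← Finset.mul_prod_erase _ p (Finset.mem_univ i0), hs]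
    simp only [hpdef]
    ring
  obtain ⟨t, hNt⟩ := hcase
  have hNm1 : N - 1 = a ^ c i0 * n + q ^ (v + 1) * t := by omega
  have hN1ne : N - 1 ≠ 0 := by
    have : 1 ≤ a ^ c i0 * n := Nat.one_le_iff_ne_zero.mpr hXne
    omega
  have hv_dvd : q ^ v ∣ N - 1 := by
    rw [hNm1]
    exact dvd_add (hdiv (c i0)) (dvd_mul_of_dvd_left (pow_dvd_pow q (Nat.le_succ v)) t)
  have hv_not : ¬ q ^ (v + 1) ∣ N - 1 := by
    intro h
    apply hndX
    have h3 := Nat.dvd_sub h (dvd_mul_right (q ^ (v + 1)) t)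
    rwa [hNm1, Nat.add_sub_cancel] at h3
  have hfactN : (N - 1).factorization q = v := by
    have h1 : v ≤ (N - 1).factorization q :=
      (Nat.Prime.pow_dvd_iff_le_factorization hq hN1ne).mp hv_dvd
    have h2 : (N - 1).factorization q < v + 1 := by
      by_contra h
      exact hv_not ((Nat.Prime.pow_dvd_iff_le_factorization hq hN1ne).mpr (by omega))
    omega
  -- divisibility of the totient
  have hφdvd : q ^ (α * C + β * m) ∣ Nat.totient N := by
    rw [htot, pow_add]
    exact mul_dvd_mul (by rw [pow_mul]; exact pow_dvd_pow_of_dvd hqa C)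
      (by rw [pow_mul]; exact pow_dvd_pow_of_dvd hqn m)
  have hkey : α * C + β * m ≤ m * v := by
    have hd2 : q ^ (α * C + β * m) ∣ (N - 1) ^ m := hφdvd.trans hdvd
    have hne : (N - 1) ^ m ≠ 0 := pow_ne_zero _ hN1ne
    have h5 := (Nat.Prime.pow_dvd_iff_le_factorization hq hne).mp hd2
    rwa [Nat.factorization_pow, Finsupp.smul_apply, smul_eq_mul, hfactN] at h5
  -- C > m * c i0
  have hClt : m * c i0 < C := by
    set i1 : Fin m := ⟨1, by omega⟩ with hi1def
    have h2 : c i0 < c i1 := hmono (by simp [hi0def, hi1def, Fin.lt_def])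
    calc m * c i0 = ∑ _i : Fin m, c i0 := by
          rw [Finset.sum_const, Finset.card_univ, Fintype.card_fin, smul_eq_mul]
      _ < ∑ i, c i :=
          Finset.sum_lt_sum (fun i _ => hmono.monotone (by simp [hi0def, Fin.le_def]))
            ⟨i1, Finset.mem_univ _, h2⟩
  -- contradiction
  have h3 : m * v = α * (m * c i0) + β * m := by rw [hvdef]; ring
  rw [h3] at hkey
  have hfin : α * C ≤ α * (m * c i0) := Nat.le_of_add_le_add_right hkey
  have hCle : C ≤ m * c i0 := Nat.le_of_mul_le_mul_left hfin (by omega)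
  exact absurd hClt (not_lt.mpr hCle)
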